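/- For fixed real numbers f_1 and f_2, the function h(α) = α + log(1 + e^{f_1 - α}) + log(1 + e^{f_2 - α}) is convex on ℝ and is globally minimized at α = (f_1 + f_2)/2. -/

import Mathlib

open Real

lemma bouchard_hasDerivAt (f x : ℝ) :
    HasDerivAt (fun x => Real.log (1 + Real.exp (f - x)))
      ((1 + Real.exp (f - x))⁻¹ - 1) x := by
  have hu : HasDerivAt (fun x => 1 + Real.exp (f - x)) (-Real.exp (f - x)) x := by
    have h1 : HasDerivAt (fun x : ℝ => f - x) (-1) x := by
      simpa using (hasDerivAt_id x).const_sub f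
    have := (Real.hasDerivAt_exp (f - x)).comp x h1
    simpa using this.const_add 1
  have hpos : 0 < 1 + Real.exp (f - x) := by positivity
  have := (Real.hasDerivAt_log hpos.ne').comp x hu
  refine this.congr_deriv ?_
  linear_combination -(inv_mul_cancel₀ hpos.ne')
lemma bouchard_convex_g (f : ℝ) :
    ConvexOn ℝ Set.univ (fun x => Real.log (1 + Real.exp (f - x))) := by
  have hdiff : Differentiable ℝ (fun x => Real.log (1 + Real.exp (f - x))) :=
    fun x => (bouchard_hasDerivAt f x).differentiableAt
  apply Monotone.convexOn_univ_of_deriv hdiff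
  have hderiv : deriv (fun x => Real.log (1 + Real.exp (f - x)))
      = fun x => (1 + Real.exp (f - x))⁻¹ - 1 := by
    ext x; exact (bouchard_hasDerivAt f x).deriv
  rw [hderiv]
  intro a b hab
  have h1 : Real.exp (f - b) ≤ Real.exp (f - a) :=
    Real.exp_le_exp.2 (by linarith)
  have ha : (0:ℝ) < 1 + Real.exp (f - a) := by positivity
  have : (1 + Real.exp (f - a))⁻¹ ≤ (1 + Real.exp (f - b))⁻¹ :=
    one_div (1 + Real.exp (f - a)) ▸ one_div (1 + Real.exp (f - b)) ▸
      one_div_le_one_div_of_le (by positivity) (by linarith)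
  linarith

lemma bouchard_h_eq (f1 f2 α : ℝ) :
    α + Real.log (1 + Real.exp (f1 - α)) + Real.log (1 + Real.exp (f2 - α)) =
      Real.log (Real.exp α + Real.exp (f1 + f2 - α) + Real.exp f1 + Real.exp f2) := by
  have key : ∀ f : ℝ, 1 + Real.exp (f - α) = (Real.exp α + Real.exp f) / Real.exp α := by
    intro f
    rw [Real.exp_sub]
    field_simp
  rw [key f1, key f2]
  have h1 : (0:ℝ) < Real.exp α + Real.exp f1 := by positivity
  have h2 : (0:ℝ) < Real.exp α + Real.exp f2 := by positivity
  rw [Real.log_div h1.ne' (Real.exp_ne_zero α), Real.log_div h2.ne' (Real.exp_ne_zero α),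
    Real.log_exp]
  have : Real.exp α + Real.exp (f1 + f2 - α) + Real.exp f1 + Real.exp f2
      = (Real.exp α + Real.exp f1) * (Real.exp α + Real.exp f2) / Real.exp α := by
    rw [Real.exp_sub, Real.exp_add]
    field_simp
    ring
  rw [this, Real.log_div (by positivity) (Real.exp_ne_zero α),
    Real.log_mul h1.ne' h2.ne', Real.log_exp]
  ring

/-- For fixed `f₁, f₂`, Bouchard's upper bound on `log (e^{f₁} + e^{f₂})`,
`h α = α + log (1 + e^{f₁ - α}) + log (1 + e^{f₂ - α})`,
is convex in `α` and globally minimized at `α = (f₁ + f₂)/2`. -/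
theorem bouchard_alpha_optimal (f1 f2 : ℝ) :
    ConvexOn ℝ Set.univ (fun α : ℝ =>
      α + Real.log (1 + Real.exp (f1 - α)) + Real.log (1 + Real.exp (f2 - α))) ∧
    ∀ β : ℝ,
      ((f1 + f2) / 2) + Real.log (1 + Real.exp (f1 - (f1 + f2) / 2)) +
          Real.log (1 + Real.exp (f2 - (f1 + f2) / 2)) ≤
        β + Real.log (1 + Real.exp (f1 - β)) + Real.log (1 + Real.exp (f2 - β)) := by
  constructor
  · exact ((convexOn_id convex_univ).add (bouchard_convex_g f1)).add (bouchard_convex_g f2)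
  · intro β
    set s := (f1 + f2) / 2 with hs
    rw [bouchard_h_eq f1 f2 s, bouchard_h_eq f1 f2 β]
    apply Real.log_le_log (by positivity)
    have key : Real.exp s + Real.exp (f1 + f2 - s) ≤ Real.exp β + Real.exp (f1 + f2 - β) := by
      have h1 : Real.exp s + Real.exp (f1 + f2 - s) = 2 * Real.exp s := by
        rw [show f1 + f2 - s = s by rw [hs]; ring]; ring
      have h2 := two_mul_le_add_sq (Real.exp (β / 2)) (Real.exp (s - β / 2))
      have e1 : Real.exp (β / 2) ^ 2 = Real.exp β := by
        rw [sq, ← Real.exp_add]; ring_nf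
      have e2 : Real.exp (s - β / 2) ^ 2 = Real.exp (f1 + f2 - β) := by
        rw [sq, ← Real.exp_add]; congr 1; rw [hs]; ring
      have e3 : Real.exp (β / 2) * Real.exp (s - β / 2) = Real.exp s := by
        rw [← Real.exp_add]; congr 1; ring
      rw [e1, e2] at h2
      nlinarith [h2, e3]
    linarith
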